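/- Let μ be a growth rate and suppose x' = A(t)x admits a nonuniform μ-dichotomy with projections π(t) and constants D, λ_s, λ_u, ν, ω. Define V_s(t,x_s) = sup_{κ ≥ t} ‖Ψ(κ,t)x_s‖ (μ(κ)/μ(t))^{−λ_s}, V_u(t,x_u) = sup_{κ ≤ t} ‖Ψ(κ,t)x_u‖ (μ(κ)/μ(t))^{−λ_u}, and V(t,x) = −V_s(t, π(t)x) + V_u(t, (id − π(t))x). Then: (i) |V(t,x)| ≤ 2D max{μ(t)^{sign(t)ν}, μ(t)^{sign(t)ω}} ‖x‖ for all t, x; (ii) V(t, Ψ(t,τ)x) ≥ V(τ,x) for all t ≥ τ and all x; (iii) if x ∈ ℰ_τ^u then V(t, Ψ(t,τ)x) ≥ (μ(t)/μ(τ))^{λ_u} V(τ,x) for all t ≥ τ; (iv) if x ∈ ℰ_τ^s then |V(t, Ψ(t,τ)x)| ≤ (μ(t)/μ(τ))^{λ_s} |V(τ,x)| for all t ≥ τ; (v) setting C_u(τ) = min{(μ(τ−1)/μ(τ))^{λ_s} − 1, 1 − (μ(τ−1)/μ(τ))^{λ_u}} and C_s(τ) = min{1 − (μ(τ+1)/μ(τ))^{λ_s},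 (μ(τ+1)/μ(τ))^{λ_u} − 1}, both positive, one has V(τ,x) ≥ C_u(τ) ‖x‖ for x ∈ ℰ_τ^u and |V(τ,x)| ≥ C_s(τ) ‖x‖ for x ∈ ℰ_τ^s. -/
import Mathlib


open Filter MeasureTheory
open scoped Topology RealInnerProductSpace

noncomputable section

/-- Euclidean space `ℝⁿ`. -/
abbrev Euc (n : ℕ) := EuclideanSpace ℝ (Fin n)

/-- `μ` is a growth rate: strictly increasing, positive, `μ 0 = 1`,
`μ(t) → +∞` as `t → +∞` and `μ(t) → 0` as `t → -∞`. -/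
def IsGrowthRate (μ : ℝ → ℝ) : Prop :=
  StrictMono μ ∧ (∀ t, 0 < μ t) ∧ μ 0 = 1 ∧
    Filter.Tendsto μ Filter.atTop Filter.atTop ∧
    Filter.Tendsto μ Filter.atBot (nhds 0)

/-- `Ψ` is the evolution operator of the linear equation `x' = A(t) x`. -/
def IsEvolution {n : ℕ} (A : ℝ → Euc n →L[ℝ] Euc n) (Ψ : ℝ → ℝ → Euc n →L[ℝ] Euc n) : Prop :=
  (∀ s, Ψ s s = ContinuousLinearMap.id ℝ (Euc n)) ∧
  (∀ t r s, (Ψ t r).comp (Ψ r s) = Ψ t s) ∧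
  (∀ s x₀ t, HasDerivAt (fun r => Ψ r s x₀) (A t (Ψ t s x₀)) t)

/-- Nonuniform μ-dichotomy for the evolution operator `Ψ` with projections `π`
and constants `D, λs, λu, ν, ω`. -/
def HasMuDichotomy {n : ℕ} (μ : ℝ → ℝ) (Ψ : ℝ → ℝ → Euc n →L[ℝ] Euc n)
    (π : ℝ → Euc n →L[ℝ] Euc n) (D lams lamu ν ω : ℝ) : Prop :=
  (∀ t, (π t).comp (π t) = π t) ∧
  (∀ t s, (π t).comp (Ψ t s) = (Ψ t s).comp (π s)) ∧
  1 ≤ D ∧ lams < 0 ∧ 0 < lamu ∧ 0 ≤ ν ∧ 0 ≤ ω ∧ lams + ν < 0 ∧ 0 < lamu - ω ∧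
  (∀ t s, s ≤ t → ‖(Ψ t s).comp (π s)‖ ≤ D * (μ t / μ s) ^ lams * μ s ^ (Real.sign s * ν)) ∧
  (∀ t s, t ≤ s → ‖(Ψ t s).comp (1 - π s)‖ ≤ D * (μ t / μ s) ^ lamu * μ s ^ (Real.sign s * ω))

/-- Nonuniform μ-bounded growth for `Ψ` with constants `D, λmax, θ`. -/
def HasMuBoundedGrowth {n : ℕ} (μ : ℝ → ℝ) (Ψ : ℝ → ℝ → Euc n →L[ℝ] Euc n)
    (D lamMax θ : ℝ) : Prop :=
  1 ≤ D ∧ 0 < lamMax ∧ 0 ≤ θ ∧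
  ∀ t s, ‖Ψ t s‖ ≤ D * (μ t / μ s) ^ (Real.sign (t - s) * lamMax) * μ s ^ (Real.sign s * θ)

/-- Local boundedness condition (bou-u). -/
def LocBdd {n : ℕ} (μ : ℝ → ℝ) (Ψ : ℝ → ℝ → Euc n →L[ℝ] Euc n) (Dt c lamt : ℝ) : Prop :=
  1 ≤ Dt ∧ 0 < c ∧ 0 < lamt ∧
  ∀ t s, s ∈ Set.Icc (t - c) (t + c) → ‖Ψ t s‖ ≤ Dt * μ |t| ^ lamt

/-- `f` belongs to the class `𝒜_f`: `f(t,0) = 0` and `f(t,·)` is Lipschitz with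
constant `φ(t) = δf · μ(t)^{-1-sign(t)θ} · μ'(t)`. -/
def MemClassAf {n : ℕ} (μ μ' : ℝ → ℝ) (θ δf : ℝ) (f : ℝ → Euc n → Euc n) : Prop :=
  (∀ t, f t 0 = 0) ∧
  ∀ t x y, ‖f t x - f t y‖ ≤ (δf * μ t ^ (-1 - Real.sign t * θ) * μ' t) * ‖x - y‖

/-- `X t τ x₀` is the (unique, globally defined) solution of `x' = A(t)x + f(t,x)`
with `X τ τ x₀ = x₀`. -/
def IsSolutionFamily {n : ℕ} (A : ℝ → Euc n →L[ℝ] Euc n) (f : ℝ → Euc n → Euc n)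
    (X : ℝ → ℝ → Euc n → Euc n) : Prop :=
  (∀ τ x₀, X τ τ x₀ = x₀) ∧
  ∀ τ x₀ t, HasDerivAt (fun r => X r τ x₀) (A t (X t τ x₀) + f t (X t τ x₀)) t

/-- `V_s(t,x) = sup_{κ ≥ t} ‖Ψ(κ,t)x‖ (μ(κ)/μ(t))^{−λs}`. -/
def VsFun {n : ℕ} (μ : ℝ → ℝ) (lams : ℝ) (Ψ : ℝ → ℝ → Euc n →L[ℝ] Euc n)
    (t : ℝ) (x : Euc n) : ℝ :=
  sSup {r : ℝ | ∃ κ, t ≤ κ ∧ r = ‖Ψ κ t x‖ * (μ κ / μ t) ^ (-lams)}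

/-- `V_u(t,x) = sup_{κ ≤ t} ‖Ψ(κ,t)x‖ (μ(κ)/μ(t))^{−λu}`. -/
def VuFun {n : ℕ} (μ : ℝ → ℝ) (lamu : ℝ) (Ψ : ℝ → ℝ → Euc n →L[ℝ] Euc n)
    (t : ℝ) (x : Euc n) : ℝ :=
  sSup {r : ℝ | ∃ κ, κ ≤ t ∧ r = ‖Ψ κ t x‖ * (μ κ / μ t) ^ (-lamu)}

/-- `ℰ_τ^s = {x : V(t, Ψ(t,τ)x) ≤ 0 for all t}`. -/
def EsSet {n : ℕ} (V : ℝ → Euc n → ℝ) (Ψ : ℝ → ℝ → Euc n →L[ℝ] Euc n) (τ : ℝ) :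
    Set (Euc n) := {x | ∀ t, V t (Ψ t τ x) ≤ 0}

/-- `ℰ_τ^u = {x : V(t, Ψ(t,τ)x) ≥ 0 for all t}`. -/
def EuSet {n : ℕ} (V : ℝ → Euc n → ℝ) (Ψ : ℝ → ℝ → Euc n →L[ℝ] Euc n) (τ : ℝ) :
    Set (Euc n) := {x | ∀ t, 0 ≤ V t (Ψ t τ x)}

private lemma rpow_ratio {x y z : ℝ} (l : ℝ) (hx : 0 < x) (hy : 0 < y) (hz : 0 < z) :
    (x / y) ^ (-l) = (y / z) ^ l * (x / z) ^ (-l) := by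
  rw [Real.rpow_neg (div_pos hx hy).le, Real.rpow_neg (div_pos hx hz).le,
      Real.div_rpow hx.le hy.le, Real.div_rpow hx.le hz.le, Real.div_rpow hy.le hz.le]
  have h1 := (Real.rpow_pos_of_pos hx l).ne'
  have h2 := (Real.rpow_pos_of_pos hy l).ne'
  have h3 := (Real.rpow_pos_of_pos hz l).ne'
  field_simp

private lemma rpow_mul_rpow_neg {x : ℝ} (l : ℝ) (hx : 0 < x) : x ^ l * x ^ (-l) = 1 := by
  rw [← Real.rpow_add hx]; simp

section Aux

variable {n : ℕ} (μ : ℝ → ℝ) (Ψ : ℝ → ℝ → Euc n →L[ℝ] Euc n)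
  (π : ℝ → Euc n →L[ℝ] Euc n) (D lams lamu ν ω : ℝ)

private lemma sup_forward (hpos : ∀ t, 0 < μ t)
    (hco : ∀ t r s (x : Euc n), Ψ t r (Ψ r s x) = Ψ t s x)
    (l : ℝ) (P : ℝ → ℝ → Prop) (a b : ℝ) (hP : ∀ κ, P a κ → P b κ) (hPa : P a a)
    (w : Euc n)
    (hbdd : BddAbove {r | ∃ κ, P b κ ∧ r = ‖Ψ κ b w‖ * (μ κ / μ b) ^ (-l)}) :
    sSup {r | ∃ κ, P a κ ∧ r = ‖Ψ κ a (Ψ a b w)‖ * (μ κ / μ a) ^ (-l)} ≤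
      (μ a / μ b) ^ l * sSup {r | ∃ κ, P b κ ∧ r = ‖Ψ κ b w‖ * (μ κ / μ b) ^ (-l)} := by
  have hne : Set.Nonempty {r | ∃ κ, P a κ ∧ r = ‖Ψ κ a (Ψ a b w)‖ * (μ κ / μ a) ^ (-l)} :=
    ⟨_, a, hPa, rfl⟩
  apply csSup_le hne
  rintro r ⟨κ, hκ, rfl⟩
  rw [hco, rpow_ratio l (hpos κ) (hpos a) (hpos b),
    show ‖Ψ κ b w‖ * ((μ a / μ b) ^ l * (μ κ / μ b) ^ (-l)) =
      (μ a / μ b) ^ l * (‖Ψ κ b w‖ * (μ κ / μ b) ^ (-l)) by ring]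
  exact mul_le_mul_of_nonneg_left (le_csSup hbdd ⟨κ, hP κ hκ, rfl⟩)
    (Real.rpow_nonneg (div_pos (hpos a) (hpos b)).le l)

private lemma sup_backward (hpos : ∀ t, 0 < μ t)
    (hco : ∀ t r s (x : Euc n), Ψ t r (Ψ r s x) = Ψ t s x)
    (l : ℝ) (P : ℝ → ℝ → Prop) (a b : ℝ) (hP : ∀ κ, P b κ → P a κ) (hPb : P b b)
    (w : Euc n)
    (hbdd : BddAbove {r | ∃ κ, P a κ ∧ r = ‖Ψ κ a (Ψ a b w)‖ * (μ κ / μ a) ^ (-l)}) :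
    (μ a / μ b) ^ l * sSup {r | ∃ κ, P b κ ∧ r = ‖Ψ κ b w‖ * (μ κ / μ b) ^ (-l)} ≤
      sSup {r | ∃ κ, P a κ ∧ r = ‖Ψ κ a (Ψ a b w)‖ * (μ κ / μ a) ^ (-l)} := by
  have hc : (0:ℝ) < (μ a / μ b) ^ l := Real.rpow_pos_of_pos (div_pos (hpos a) (hpos b)) l
  rw [mul_comm, ← le_div_iff₀ hc]
  have hne : Set.Nonempty {r | ∃ κ, P b κ ∧ r = ‖Ψ κ b w‖ * (μ κ / μ b) ^ (-l)} :=
    ⟨_, b, hPb, rfl⟩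
  apply csSup_le hne
  rintro r ⟨κ, hκ, rfl⟩
  rw [le_div_iff₀ hc,
    show ‖Ψ κ b w‖ * (μ κ / μ b) ^ (-l) * (μ a / μ b) ^ l =
      ‖Ψ κ a (Ψ a b w)‖ * (μ κ / μ a) ^ (-l) by
        rw [hco, rpow_ratio l (hpos κ) (hpos a) (hpos b)]; ring]
  exact le_csSup hbdd ⟨κ, hP κ hκ, rfl⟩

private lemma norm_le_sup (hpos : ∀ t, 0 < μ t)
    (hid : ∀ s, Ψ s s = ContinuousLinearMap.id ℝ (Euc n))
    (l : ℝ) (P : ℝ → ℝ → Prop) (t : ℝ) (hPt : P t t) (w : Euc n)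
    (hbdd : BddAbove {r | ∃ κ, P t κ ∧ r = ‖Ψ κ t w‖ * (μ κ / μ t) ^ (-l)}) :
    ‖w‖ ≤ sSup {r | ∃ κ, P t κ ∧ r = ‖Ψ κ t w‖ * (μ κ / μ t) ^ (-l)} := by
  have hmem : ‖w‖ ∈ {r | ∃ κ, P t κ ∧ r = ‖Ψ κ t w‖ * (μ κ / μ t) ^ (-l)} := by
    refine ⟨t, hPt, ?_⟩
    rw [hid, div_self (hpos t).ne', Real.one_rpow]
    simp
  exact le_csSup hbdd hmem

private lemma s_elem_le (hpos : ∀ t, 0 < μ t)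
    (hsb : ∀ t s, s ≤ t → ‖(Ψ t s).comp (π s)‖ ≤ D * (μ t / μ s) ^ lams * μ s ^ (Real.sign s * ν))
    (t : ℝ) (z : Euc n) :
    ∀ r ∈ {r : ℝ | ∃ κ, t ≤ κ ∧ r = ‖Ψ κ t (π t z)‖ * (μ κ / μ t) ^ (-lams)},
      r ≤ D * μ t ^ (Real.sign t * ν) * ‖z‖ := by
  rintro r ⟨κ, hκ, rfl⟩
  have hq : (0:ℝ) < μ κ / μ t := div_pos (hpos κ) (hpos t)
  have h1 : ‖Ψ κ t (π t z)‖ ≤ D * (μ κ / μ t) ^ lams * μ t ^ (Real.sign t * ν) * ‖z‖ := by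
    calc ‖Ψ κ t (π t z)‖ = ‖((Ψ κ t).comp (π t)) z‖ := rfl
      _ ≤ ‖(Ψ κ t).comp (π t)‖ * ‖z‖ := ContinuousLinearMap.le_opNorm _ _
      _ ≤ _ := mul_le_mul_of_nonneg_right (hsb κ t hκ) (norm_nonneg z)
  calc ‖Ψ κ t (π t z)‖ * (μ κ / μ t) ^ (-lams)
      ≤ D * (μ κ / μ t) ^ lams * μ t ^ (Real.sign t * ν) * ‖z‖ * (μ κ / μ t) ^ (-lams) :=
        mul_le_mul_of_nonneg_right h1 (Real.rpow_nonneg hq.le _)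
    _ = D * μ t ^ (Real.sign t * ν) * ‖z‖ * ((μ κ / μ t) ^ lams * (μ κ / μ t) ^ (-lams)) := by
        ring
    _ = D * μ t ^ (Real.sign t * ν) * ‖z‖ := by rw [rpow_mul_rpow_neg _ hq, mul_one]

private lemma u_elem_le (hpos : ∀ t, 0 < μ t)
    (hub : ∀ t s, t ≤ s →
      ‖(Ψ t s).comp (1 - π s)‖ ≤ D * (μ t / μ s) ^ lamu * μ s ^ (Real.sign s * ω))
    (t : ℝ) (z : Euc n) :
    ∀ r ∈ {r : ℝ | ∃ κ, κ ≤ t ∧ r = ‖Ψ κ t ((1 - π t) z)‖ * (μ κ / μ t) ^ (-lamu)},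
      r ≤ D * μ t ^ (Real.sign t * ω) * ‖z‖ := by
  rintro r ⟨κ, hκ, rfl⟩
  have hq : (0:ℝ) < μ κ / μ t := div_pos (hpos κ) (hpos t)
  have h1 : ‖Ψ κ t ((1 - π t) z)‖ ≤ D * (μ κ / μ t) ^ lamu * μ t ^ (Real.sign t * ω) * ‖z‖ := by
    calc ‖Ψ κ t ((1 - π t) z)‖ = ‖((Ψ κ t).comp (1 - π t)) z‖ := rfl
      _ ≤ ‖(Ψ κ t).comp (1 - π t)‖ * ‖z‖ := ContinuousLinearMap.le_opNorm _ _
      _ ≤ _ := mul_le_mul_of_nonneg_right (hub κ t hκ) (norm_nonneg z)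
  calc ‖Ψ κ t ((1 - π t) z)‖ * (μ κ / μ t) ^ (-lamu)
      ≤ D * (μ κ / μ t) ^ lamu * μ t ^ (Real.sign t * ω) * ‖z‖ * (μ κ / μ t) ^ (-lamu) :=
        mul_le_mul_of_nonneg_right h1 (Real.rpow_nonneg hq.le _)
    _ = D * μ t ^ (Real.sign t * ω) * ‖z‖ * ((μ κ / μ t) ^ lamu * (μ κ / μ t) ^ (-lamu)) := by
        ring
    _ = D * μ t ^ (Real.sign t * ω) * ‖z‖ := by rw [rpow_mul_rpow_neg _ hq, mul_one]

end Aux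

/-- Proposition: a nonuniform μ-dichotomy yields a strict Lyapunov
function, given explicitly by `V(t,x) = −V_s(t,π(t)x) + V_u(t,(id−π(t))x)`. -/
theorem strict_lyapunov_from_dichotomy
    {n : ℕ} (hn : 1 ≤ n)
    (μ : ℝ → ℝ) (hμ : IsGrowthRate μ)
    (A : ℝ → Euc n →L[ℝ] Euc n) (Ψ : ℝ → ℝ → Euc n →L[ℝ] Euc n)
    (hΨ : IsEvolution A Ψ)
    (π : ℝ → Euc n →L[ℝ] Euc n) (D lams lamu ν ω : ℝ)
    (hdich : HasMuDichotomy μ Ψ π D lams lamu ν ω)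
    (V : ℝ → Euc n → ℝ)
    (hV : ∀ t x, V t x = -(VsFun μ lams Ψ t (π t x)) + VuFun μ lamu Ψ t ((1 - π t) x)) :
    -- (i)
    (∀ t : ℝ, ∀ x : Euc n,
      |V t x| ≤ 2 * D * max (μ t ^ (Real.sign t * ν)) (μ t ^ (Real.sign t * ω)) * ‖x‖) ∧
    -- (ii)
    (∀ τ t : ℝ, τ ≤ t → ∀ x : Euc n, V τ x ≤ V t (Ψ t τ x)) ∧
    -- (iii)
    (∀ τ t : ℝ, τ ≤ t → ∀ x ∈ EuSet V Ψ τ,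
      (μ t / μ τ) ^ lamu * V τ x ≤ V t (Ψ t τ x)) ∧
    -- (iv)
    (∀ τ t : ℝ, τ ≤ t → ∀ x ∈ EsSet V Ψ τ,
      |V t (Ψ t τ x)| ≤ (μ t / μ τ) ^ lams * |V τ x|) ∧
    -- (v)
    (∀ τ : ℝ,
      0 < min ((μ (τ - 1) / μ τ) ^ lams - 1) (1 - (μ (τ - 1) / μ τ) ^ lamu) ∧
      0 < min (1 - (μ (τ + 1) / μ τ) ^ lams) ((μ (τ + 1) / μ τ) ^ lamu - 1) ∧
      (∀ x ∈ EuSet V Ψ τ,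
        min ((μ (τ - 1) / μ τ) ^ lams - 1) (1 - (μ (τ - 1) / μ τ) ^ lamu) * ‖x‖ ≤ V τ x) ∧
      (∀ x ∈ EsSet V Ψ τ,
        min (1 - (μ (τ + 1) / μ τ) ^ lams) ((μ (τ + 1) / μ τ) ^ lamu - 1) * ‖x‖ ≤ |V τ x|)) := by
  obtain ⟨hmono, hpos, -, -, -⟩ := hμ
  obtain ⟨hidC, hcoC, -⟩ := hΨ
  obtain ⟨hππ, hcommC, hD, hlams, hlamu, hν, hω, -, -, hsb, hub⟩ := hdich
  -- pointwise versions
  have hco : ∀ t r s (x : Euc n), Ψ t r (Ψ r s x) = Ψ t s x := fun t r s x => by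
    simpa using ContinuousLinearMap.ext_iff.mp (hcoC t r s) x
  have hππ' : ∀ t (x : Euc n), π t (π t x) = π t x := fun t x => by
    simpa using ContinuousLinearMap.ext_iff.mp (hππ t) x
  have hcomm : ∀ t s (x : Euc n), π t (Ψ t s x) = Ψ t s (π s x) := fun t s x => by
    simpa using ContinuousLinearMap.ext_iff.mp (hcommC t s) x
  have hΨid : ∀ s (x : Euc n), Ψ s s x = x := fun s x => by rw [hidC]; rfl
  have hQcomm : ∀ t s (x : Euc n), (1 - π t) (Ψ t s x) = Ψ t s ((1 - π s) x) := by
    intro t s x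
    simp only [ContinuousLinearMap.sub_apply, ContinuousLinearMap.one_apply, map_sub,
      hcomm t s x]
  -- bddAbove of the relevant sets
  have bddS : ∀ t (z : Euc n),
      BddAbove {r | ∃ κ, t ≤ κ ∧ r = ‖Ψ κ t (π t z)‖ * (μ κ / μ t) ^ (-lams)} :=
    fun t z => ⟨_, fun r hr => s_elem_le μ Ψ π D lams ν hpos hsb t z r hr⟩
  have bddU : ∀ t (z : Euc n),
      BddAbove {r | ∃ κ, κ ≤ t ∧ r = ‖Ψ κ t ((1 - π t) z)‖ * (μ κ / μ t) ^ (-lamu)} :=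
    fun t z => ⟨_, fun r hr => u_elem_le μ Ψ π D lamu ω hpos hub t z r hr⟩
  -- abbreviate
  set S : ℝ → Euc n → ℝ := fun t x => VsFun μ lams Ψ t (π t x) with hS
  set U : ℝ → Euc n → ℝ := fun t x => VuFun μ lamu Ψ t ((1 - π t) x) with hU
  have hVSU : ∀ t x, V t x = -(S t x) + U t x := hV
  -- upper bounds
  have hS_le : ∀ t (x : Euc n), S t x ≤ D * μ t ^ (Real.sign t * ν) * ‖x‖ := by
    intro t x
    exact csSup_le ⟨_, t, le_rfl, rfl⟩ (s_elem_le μ Ψ π D lams ν hpos hsb t x)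
  have hU_le : ∀ t (x : Euc n), U t x ≤ D * μ t ^ (Real.sign t * ω) * ‖x‖ := by
    intro t x
    exact csSup_le ⟨_, t, le_rfl, rfl⟩ (u_elem_le μ Ψ π D lamu ω hpos hub t x)
  -- lower bounds
  have hS_ge : ∀ t (x : Euc n), ‖π t x‖ ≤ S t x := fun t x =>
    norm_le_sup μ Ψ hpos hidC lams (fun a b => a ≤ b) t le_rfl (π t x) (bddS t x)
  have hU_ge : ∀ t (x : Euc n), ‖(1 - π t) x‖ ≤ U t x := fun t x =>
    norm_le_sup μ Ψ hpos hidC lamu (fun a b => b ≤ a) t le_rfl ((1 - π t) x) (bddU t x)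
  have hS0 : ∀ t (x : Euc n), 0 ≤ S t x := fun t x => (norm_nonneg _).trans (hS_ge t x)
  have hU0 : ∀ t (x : Euc n), 0 ≤ U t x := fun t x => (norm_nonneg _).trans (hU_ge t x)
  -- the four comparison inequalities
  have hA : ∀ τ t, τ ≤ t → ∀ x : Euc n,
      S t (Ψ t τ x) ≤ (μ t / μ τ) ^ lams * S τ x := by
    intro τ t h x
    have := sup_forward μ Ψ hpos hco lams (fun a b => a ≤ b) t τ
      (fun κ hκ => h.trans hκ) le_rfl (π τ x) (bddS τ x)
    simpa only [hS, VsFun, hcomm t τ x] using this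
  have hB : ∀ τ' τ, τ' ≤ τ → ∀ x : Euc n,
      (μ τ' / μ τ) ^ lams * S τ x ≤ S τ' (Ψ τ' τ x) := by
    intro τ' τ h x
    have hbdd := bddS τ' (Ψ τ' τ x)
    rw [hcomm τ' τ x] at hbdd
    have := sup_backward μ Ψ hpos hco lams (fun a b => a ≤ b) τ' τ
      (fun κ hκ => h.trans hκ) le_rfl (π τ x) hbdd
    simpa only [hS, VsFun, hcomm τ' τ x] using this
  have hC : ∀ τ t, τ ≤ t → ∀ x : Euc n,
      (μ t / μ τ) ^ lamu * U τ x ≤ U t (Ψ t τ x) := by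
    intro τ t h x
    have hbdd := bddU t (Ψ t τ x)
    rw [hQcomm t τ x] at hbdd
    have := sup_backward μ Ψ hpos hco lamu (fun a b => b ≤ a) t τ
      (fun κ hκ => hκ.trans h) le_rfl ((1 - π τ) x) hbdd
    simpa only [hU, VuFun, hQcomm t τ x] using this
  have hDl : ∀ τ' τ, τ' ≤ τ → ∀ x : Euc n,
      U τ' (Ψ τ' τ x) ≤ (μ τ' / μ τ) ^ lamu * U τ x := by
    intro τ' τ h x
    have := sup_forward μ Ψ hpos hco lamu (fun a b => b ≤ a) τ' τ
      (fun κ hκ => hκ.trans h) le_rfl ((1 - π τ) x) (bddU τ x)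
    simpa only [hU, VuFun, hQcomm τ' τ x] using this
  refine ⟨?_, ?_, ?_, ?_, ?_⟩
  · -- (i)
    intro t x
    rw [hVSU t x]
    have hM1 : D * μ t ^ (Real.sign t * ν) * ‖x‖ ≤
        D * max (μ t ^ (Real.sign t * ν)) (μ t ^ (Real.sign t * ω)) * ‖x‖ :=
      mul_le_mul_of_nonneg_right
        (mul_le_mul_of_nonneg_left (le_max_left _ _) (by linarith)) (norm_nonneg x)
    have hM2 : D * μ t ^ (Real.sign t * ω) * ‖x‖ ≤
        D * max (μ t ^ (Real.sign t * ν)) (μ t ^ (Real.sign t * ω)) * ‖x‖ :=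
      mul_le_mul_of_nonneg_right
        (mul_le_mul_of_nonneg_left (le_max_right _ _) (by linarith)) (norm_nonneg x)
    have hM0 : 0 ≤ D * max (μ t ^ (Real.sign t * ν)) (μ t ^ (Real.sign t * ω)) * ‖x‖ := by
      have : (0:ℝ) ≤ max (μ t ^ (Real.sign t * ν)) (μ t ^ (Real.sign t * ω)) :=
        (Real.rpow_nonneg (hpos t).le _).trans (le_max_left _ _)
      have hD0 : (0:ℝ) ≤ D := by linarith
      positivity
    rw [abs_le]
    constructor
    · have := (hS_le t x).trans hM1
      have h0 := hU0 t x
      linarith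
    · have := (hU_le t x).trans hM2
      have h0 := hS0 t x
      linarith
  · -- (ii)
    intro τ t hτt x
    rw [hVSU τ x, hVSU t (Ψ t τ x)]
    have hμle : μ τ ≤ μ t := hmono.le_iff_le.mpr hτt
    have hr1 : 1 ≤ μ t / μ τ := (one_le_div (hpos τ)).mpr hμle
    have ha1 : (μ t / μ τ) ^ lams ≤ 1 := Real.rpow_le_one_of_one_le_of_nonpos hr1 hlams.le
    have hb1 : 1 ≤ (μ t / μ τ) ^ lamu := by
      have := Real.rpow_le_rpow_of_exponent_le hr1 hlamu.le (y := 0)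
      simpa using this
    have hAx := hA τ t hτt x
    have hCx := hC τ t hτt x
    have hs0 := hS0 τ x
    have hu0 := hU0 τ x
    have hps : (μ t / μ τ) ^ lams * S τ x ≤ S τ x := mul_le_of_le_one_left hs0 ha1
    have hpu : U τ x ≤ (μ t / μ τ) ^ lamu * U τ x := le_mul_of_one_le_left hu0 hb1
    linarith
  · -- (iii)
    intro τ t hτt x _
    rw [hVSU τ x, hVSU t (Ψ t τ x)]
    have hμle : μ τ ≤ μ t := hmono.le_iff_le.mpr hτt
    have hr1 : 1 ≤ μ t / μ τ := (one_le_div (hpos τ)).mpr hμle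
    have ha1 : (μ t / μ τ) ^ lams ≤ 1 := Real.rpow_le_one_of_one_le_of_nonpos hr1 hlams.le
    have hb1 : 1 ≤ (μ t / μ τ) ^ lamu := by
      have := Real.rpow_le_rpow_of_exponent_le hr1 hlamu.le (y := 0)
      simpa using this
    have hAx := hA τ t hτt x
    have hCx := hC τ t hτt x
    have hs0 := hS0 τ x
    have habs : (μ t / μ τ) ^ lams * S τ x ≤ (μ t / μ τ) ^ lamu * S τ x :=
      mul_le_mul_of_nonneg_right (ha1.trans hb1) hs0
    linarith
  · -- (iv)
    intro τ t hτt x hx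
    have hVt : V t (Ψ t τ x) ≤ 0 := hx t
    have hVτ : V τ x ≤ 0 := by have h := hx τ; rwa [hΨid] at h
    rw [abs_of_nonpos hVt, abs_of_nonpos hVτ]
    rw [hVSU τ x, hVSU t (Ψ t τ x)]
    have hμle : μ τ ≤ μ t := hmono.le_iff_le.mpr hτt
    have hr1 : 1 ≤ μ t / μ τ := (one_le_div (hpos τ)).mpr hμle
    have ha1 : (μ t / μ τ) ^ lams ≤ 1 := Real.rpow_le_one_of_one_le_of_nonpos hr1 hlams.le
    have hb1 : 1 ≤ (μ t / μ τ) ^ lamu := by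
      have := Real.rpow_le_rpow_of_exponent_le hr1 hlamu.le (y := 0)
      simpa using this
    have hAx := hA τ t hτt x
    have hCx := hC τ t hτt x
    have hu0 := hU0 τ x
    have habu : (μ t / μ τ) ^ lams * U τ x ≤ (μ t / μ τ) ^ lamu * U τ x :=
      mul_le_mul_of_nonneg_right (ha1.trans hb1) hu0
    linarith
  · -- (v)
    intro τ
    have hr1pos : 0 < μ (τ - 1) / μ τ := div_pos (hpos _) (hpos τ)
    have hr1lt : μ (τ - 1) / μ τ < 1 := (div_lt_one (hpos τ)).mpr (hmono (by linarith))
    have hα : 1 < (μ (τ - 1) / μ τ) ^ lams :=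
      Real.one_lt_rpow_of_pos_of_lt_one_of_neg hr1pos hr1lt hlams
    have hβ : (μ (τ - 1) / μ τ) ^ lamu < 1 := Real.rpow_lt_one hr1pos.le hr1lt hlamu
    have hβ0 : 0 < (μ (τ - 1) / μ τ) ^ lamu := Real.rpow_pos_of_pos hr1pos _
    have hr2pos : 0 < μ (τ + 1) / μ τ := div_pos (hpos _) (hpos τ)
    have hr2gt : 1 < μ (τ + 1) / μ τ := (one_lt_div (hpos τ)).mpr (hmono (by linarith))
    have ha' : (μ (τ + 1) / μ τ) ^ lams < 1 :=
      Real.rpow_lt_one_of_one_lt_of_neg hr2gt hlams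
    have ha'0 : 0 < (μ (τ + 1) / μ τ) ^ lams := Real.rpow_pos_of_pos hr2pos _
    have hb' : 1 < (μ (τ + 1) / μ τ) ^ lamu :=
      (Real.one_lt_rpow_iff_of_pos hr2pos).mpr (Or.inl ⟨hr2gt, hlamu⟩)
    refine ⟨lt_min (by linarith) (by linarith), lt_min (by linarith) (by linarith), ?_, ?_⟩
    · -- Eu lower bound
      intro x hx
      set α := (μ (τ - 1) / μ τ) ^ lams with hαdef
      set β := (μ (τ - 1) / μ τ) ^ lamu with hβdef
      set Cc := min (α - 1) (1 - β) with hCcdef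
      have hC1 : Cc ≤ α - 1 := min_le_left _ _
      have hC2 : Cc ≤ 1 - β := min_le_right _ _
      have hCpos : 0 < Cc := lt_min (by linarith) (by linarith)
      have hs0 := hS0 τ x
      have hu0 := hU0 τ x
      -- decomposition: ‖x‖ ≤ S τ x + U τ x
      have hnorm : ‖x‖ ≤ S τ x + U τ x := by
        have hxd : x = π τ x + (1 - π τ) x := by
          simp [ContinuousLinearMap.sub_apply, ContinuousLinearMap.one_apply]
        calc ‖x‖ = ‖π τ x + (1 - π τ) x‖ := by rw [← hxd]
          _ ≤ ‖π τ x‖ + ‖(1 - π τ) x‖ := norm_add_le _ _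
          _ ≤ S τ x + U τ x := add_le_add (hS_ge τ x) (hU_ge τ x)
      -- key inequality α s ≤ β u
      have hmem := hx (τ - 1)
      rw [hVSU (τ - 1) (Ψ (τ - 1) τ x)] at hmem
      have hBx := hB (τ - 1) τ (by linarith) x
      have hDx := hDl (τ - 1) τ (by linarith) x
      have hkey : α * S τ x ≤ β * U τ x := by linarith
      -- algebra
      rw [hVSU τ x]
      have hα0 : 0 < α := by linarith
      have h2 : (1 + Cc) * (α * S τ x) ≤ (1 + Cc) * (β * U τ x) :=
        mul_le_mul_of_nonneg_left hkey (by linarith)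
      have hple : (1 + Cc) * β ≤ (1 - Cc) * α := by
        have p1 : Cc * β ≤ (α - 1) * β := mul_le_mul_of_nonneg_right hC1 hβ0.le
        have p2 : Cc * α ≤ (1 - β) * α := mul_le_mul_of_nonneg_right hC2 hα0.le
        linarith
      have h3 : ((1 + Cc) * β) * U τ x ≤ ((1 - Cc) * α) * U τ x :=
        mul_le_mul_of_nonneg_right hple hu0
      have h4 : α * ((1 + Cc) * S τ x) ≤ α * ((1 - Cc) * U τ x) := by linarith
      have h5 : (1 + Cc) * S τ x ≤ (1 - Cc) * U τ x := le_of_mul_le_mul_left h4 hα0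
      have h1 : Cc * ‖x‖ ≤ Cc * (S τ x + U τ x) := mul_le_mul_of_nonneg_left hnorm hCpos.le
      linarith
    · -- Es lower bound
      intro x hx
      set a' := (μ (τ + 1) / μ τ) ^ lams with ha'def
      set b' := (μ (τ + 1) / μ τ) ^ lamu with hb'def
      set Cc := min (1 - a') (b' - 1) with hCcdef
      have hC1 : Cc ≤ 1 - a' := min_le_left _ _
      have hC2 : Cc ≤ b' - 1 := min_le_right _ _
      have hCpos : 0 < Cc := lt_min (by linarith) (by linarith)
      have hs0 := hS0 τ x
      have hu0 := hU0 τ x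
      have hnorm : ‖x‖ ≤ S τ x + U τ x := by
        have hxd : x = π τ x + (1 - π τ) x := by
          simp [ContinuousLinearMap.sub_apply, ContinuousLinearMap.one_apply]
        calc ‖x‖ = ‖π τ x + (1 - π τ) x‖ := by rw [← hxd]
          _ ≤ ‖π τ x‖ + ‖(1 - π τ) x‖ := norm_add_le _ _
          _ ≤ S τ x + U τ x := add_le_add (hS_ge τ x) (hU_ge τ x)
      have hVτ : V τ x ≤ 0 := by have h := hx τ; rwa [hΨid] at h
      have hmem := hx (τ + 1)
      rw [hVSU (τ + 1) (Ψ (τ + 1) τ x)] at hmem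
      have hAx := hA τ (τ + 1) (by linarith) x
      have hCx := hC τ (τ + 1) (by linarith) x
      have hkey : b' * U τ x ≤ a' * S τ x := by linarith
      rw [abs_of_nonpos hVτ, hVSU τ x]
      have hb'0 : 0 < b' := by linarith
      have h2 : (1 + Cc) * (b' * U τ x) ≤ (1 + Cc) * (a' * S τ x) :=
        mul_le_mul_of_nonneg_left hkey (by linarith)
      have hple : (1 + Cc) * a' ≤ (1 - Cc) * b' := by
        have p1 : Cc * a' ≤ (b' - 1) * a' := mul_le_mul_of_nonneg_right hC2 ha'0.le
        have p2 : Cc * b' ≤ (1 - a') * b' := mul_le_mul_of_nonneg_right hC1 hb'0.le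
        linarith
      have h3 : ((1 + Cc) * a') * S τ x ≤ ((1 - Cc) * b') * S τ x :=
        mul_le_mul_of_nonneg_right hple hs0
      have h4 : b' * ((1 + Cc) * U τ x) ≤ b' * ((1 - Cc) * S τ x) := by linarith
      have h5 : (1 + Cc) * U τ x ≤ (1 - Cc) * S τ x := le_of_mul_le_mul_left h4 hb'0
      have h1 : Cc * ‖x‖ ≤ Cc * (S τ x + U τ x) := mul_le_mul_of_nonneg_left hnorm hCpos.le
      linarith
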